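/- Let A be a dual Banach algebra with predual A_*, and suppose M ∈ σWC((A⊗̂A)')' is a σWC-virtual diagonal (a·M = M·a for all a ∈ A and a·Δ̃_A(M) = a for all a). Define P : σWC(B(A,A')) → A' by ⟨P(T), a⟩ = ⟨M, a·T⟩. Then P takes values in A_*, P is an A-bimodule homomorphism, and P ∘ Δ'_A = identity on A_*. -/

import Mathlib

open NormedSpace

set_option synthInstance.maxHeartbeats 1000000
set_option maxHeartbeats 1000000

noncomputable section

/-- The Banach-space adjoint `T' : F' → E'` of `T : E → F`. -/
def adjOp {E F : Type*} [NormedAddCommGroup E] [NormedSpace ℂ E]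
    [NormedAddCommGroup F] [NormedSpace ℂ F] (T : E →L[ℂ] F) :
    StrongDual ℂ F →L[ℂ] StrongDual ℂ E :=
  (ContinuousLinearMap.compL ℂ E F ℂ).flip T

/-- The weak topology `σ(E, p)` determined by a subspace `p ⊆ E'`. -/
def weakTop {E : Type*} [NormedAddCommGroup E] [NormedSpace ℂ E]
    (p : Submodule ℂ (StrongDual ℂ E)) : TopologicalSpace E :=
  ⨅ φ : p, TopologicalSpace.induced (fun x => (φ : StrongDual ℂ E) x) inferInstance

/-- The canonical map `E → p'` for a subspace `p ⊆ E'`. -/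
def predualMap {E : Type*} [NormedAddCommGroup E] [NormedSpace ℂ E]
    (p : Submodule ℂ (StrongDual ℂ E)) :=
  (adjOp (E := p) p.subtypeL).comp (inclusionInDoubleDual ℂ E)

/-- `p` is a predual of `E` when the canonical map `E → p'` is an isomorphism. -/
def IsPredual {E : Type*} [NormedAddCommGroup E] [NormedSpace ℂ E]
    (p : Submodule ℂ (StrongDual ℂ E)) : Prop :=
  Function.Bijective (predualMap p)

/-- The identity map of `E`, viewed as taking values in `E` with its weak topology. -/
def toWeak {E : Type*} [NormedAddCommGroup E] [NormedSpace ℂ E] : E → WeakSpace ℂ E :=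
  fun x => x

/-- Left multiplication `b ↦ a * b` as a continuous linear map. -/
def lmul {A : Type*} [NormedRing A] [NormedAlgebra ℂ A] (a : A) : A →L[ℂ] A :=
  ContinuousLinearMap.mul ℂ A a

/-- Right multiplication `b ↦ b * a` as a continuous linear map. -/
def rmul {A : Type*} [NormedRing A] [NormedAlgebra ℂ A] (a : A) : A →L[ℂ] A :=
  (ContinuousLinearMap.mul ℂ A).flip a

/-- `T ∈ σWC(B(A,A'))`: both orbit maps `a ↦ a·T = T ∘ rmul a` and
`a ↦ T·a = (lmul a)' ∘ T` are `σ(A,Ap)`-to-weak continuous. -/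
def SWC {A : Type*} [NormedRing A] [NormedAlgebra ℂ A]
    (Ap : Submodule ℂ (StrongDual ℂ A)) : Set (A →L[ℂ] StrongDual ℂ A) :=
  {T | @Continuous A (WeakSpace ℂ (A →L[ℂ] StrongDual ℂ A)) (weakTop Ap) _
        (fun a => toWeak (T.comp (rmul a))) ∧
      @Continuous A (WeakSpace ℂ (A →L[ℂ] StrongDual ℂ A)) (weakTop Ap) _
        (fun a => toWeak ((adjOp (lmul a)).comp T))}


lemma mem_of_weakTop_continuous {E : Type*} [NormedAddCommGroup E] [NormedSpace ℂ E]
    (p : Submodule ℂ (StrongDual ℂ E)) (g : StrongDual ℂ E)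
    (hg : @Continuous E ℂ (weakTop p) _ g) : g ∈ p := by
  have ht : Metric.ball (0:ℂ) 1 ∈ nhds (g 0) := by
    simpa using Metric.ball_mem_nhds (0:ℂ) one_pos
  have h0 : g ⁻¹' Metric.ball 0 1 ∈ @nhds E (weakTop p) 0 :=
    Filter.mem_map.mp ((@Continuous.tendsto E ℂ (weakTop p) _ g hg 0) ht)
  rw [weakTop, nhds_iInf] at h0
  obtain ⟨I, Ifin, V, hV, hU⟩ := Filter.mem_iInf.mp h0
  -- key vanishing claim
  have key : ∀ a : E, (∀ i : I, (i : StrongDual ℂ E) a = 0) → g a = 0 := by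
    intro a ha
    by_contra hga
    have hmem : ∀ c : ℂ, c • a ∈ g ⁻¹' Metric.ball 0 1 := by
      intro c
      rw [hU]
      refine Set.mem_iInter.2 fun i => ?_
      have := hV i
      rw [mem_nhds_induced] at this
      obtain ⟨u, hu, hsub⟩ := this
      apply hsub
      have : ((i : StrongDual ℂ E) : E → ℂ) (c • a) = ((i : StrongDual ℂ E) : E → ℂ) 0 := by
        simp [ha i]
      simpa [this] using mem_of_mem_nhds hu
    have h2 := hmem ((2 / ‖g a‖ : ℝ) : ℂ)
    simp only [Set.mem_preimage, Metric.mem_ball, dist_zero_right, map_smul, smul_eq_mul,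
      norm_mul] at h2
    have hn : ‖g a‖ > 0 := norm_pos_iff.mpr hga
    rw [Complex.norm_real] at h2
    have : ‖(2 / ‖g a‖ : ℝ)‖ * ‖g a‖ = 2 := by
      rw [Real.norm_eq_abs, abs_of_pos (by positivity), div_mul_cancel₀]
      exact ne_of_gt hn
    rw [this] at h2
    norm_num at h2
  haveI : Finite I := Ifin.to_subtype
  have hker : (⨅ i : I, LinearMap.ker ((i : StrongDual ℂ E) : E →ₗ[ℂ] ℂ)) ≤
      LinearMap.ker (g : E →ₗ[ℂ] ℂ) := by
    intro a haa
    rw [LinearMap.mem_ker]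
    exact key a fun i => (Submodule.mem_iInf _).mp haa i
  have hspan := mem_span_of_iInf_ker_le_ker hker
  have hle : Submodule.span ℂ (Set.range fun i : I => ((i : StrongDual ℂ E) : E →ₗ[ℂ] ℂ)) ≤
      Submodule.map (ContinuousLinearMap.coeLM ℂ) p := by
    rw [Submodule.span_le]
    rintro _ ⟨i, rfl⟩
    exact ⟨(i : StrongDual ℂ E), (i : p).2, rfl⟩
  obtain ⟨h, hh, hhe⟩ := hle hspan
  have : h = g := by
    apply ContinuousLinearMap.coe_injective
    exact hhe
  exact this ▸ hh

/-- The adjoint `Δ'_A` of the multiplication map, sending `μ ∈ A'` to the operator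
`b ↦ (a ↦ μ (a b))` in `B(A,A') = (A ⊗̂ A)'`. -/
def DeltaAdj {A : Type*} [NormedRing A] [NormedAlgebra ℂ A] (μ : StrongDual ℂ A) :
    A →L[ℂ] StrongDual ℂ A :=
  (ContinuousLinearMap.compL ℂ A A ℂ μ).comp ((ContinuousLinearMap.mul ℂ A).flip)

/-- Let `A` be a dual Banach algebra with predual `Ap` and let `M` be a `σWC`-virtual
diagonal (represented by a functional on `(A ⊗̂ A)' = B(A,A')`; `hM1` says `a·M = M·a` on
`σWC`, and `x = Δ̃_A(M)` satisfies `a x = a`).  Then `P : σWC(B(A,A')) → A'`,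
`⟨P(T), a⟩ = ⟨M, a·T⟩`, takes values in `Ap`, satisfies `P ∘ Δ'_A = id` on `Ap`, and is
an `A`-bimodule homomorphism: `⟨P(a·T·b), c⟩ = ⟨a·P(T)·b, c⟩ = ⟨P(T), b c a⟩`. -/
theorem stmt15 {A : Type*} [NormedRing A] [NormedAlgebra ℂ A] [CompleteSpace A]
    (Ap : Submodule ℂ (StrongDual ℂ A)) (hc : IsClosed (Ap : Set (StrongDual ℂ A)))
    (hsub : ∀ μ ∈ Ap, ∀ a : A, μ.comp (lmul a) ∈ Ap ∧ μ.comp (rmul a) ∈ Ap)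
    (hp : IsPredual Ap)
    (hmod : ∀ T ∈ SWC Ap, ∀ a : A,
      T.comp (rmul a) ∈ SWC Ap ∧ (adjOp (lmul a)).comp T ∈ SWC Ap)
    (hDelta : ∀ μ ∈ Ap, DeltaAdj μ ∈ SWC Ap)
    (M : StrongDual ℂ (A →L[ℂ] StrongDual ℂ A))
    (hM1 : ∀ a : A, ∀ T ∈ SWC Ap, M (T.comp (rmul a)) = M ((adjOp (lmul a)).comp T))
    (x : A) (hx : ∀ μ ∈ Ap, μ x = M (DeltaAdj μ)) (hxid : ∀ a : A, a * x = a) :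
    (∀ T ∈ SWC Ap, ∃ μ ∈ Ap, ∀ a : A, μ a = M (T.comp (rmul a))) ∧
    (∀ μ ∈ Ap, ∀ a : A, M ((DeltaAdj μ).comp (rmul a)) = μ a) ∧
    (∀ (a b c : A), ∀ T ∈ SWC Ap,
      M (((adjOp (lmul b)).comp (T.comp (rmul a))).comp (rmul c))
        = M (T.comp (rmul (b * c * a)))) := by
  refine ⟨?_, ?_, ?_⟩
  · -- P takes values in Ap
    intro T hT
    set ν : StrongDual ℂ A := M.comp (((ContinuousLinearMap.compL ℂ A A (StrongDual ℂ A)) T).comp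
      ((ContinuousLinearMap.mul ℂ A).flip)) with hν
    have hνa : ∀ a : A, ν a = M (T.comp (rmul a)) := fun a => rfl
    have hcont : @Continuous A ℂ (weakTop Ap) _ ν := by
      have h1 : Continuous fun y : WeakSpace ℂ (A →L[ℂ] StrongDual ℂ A) =>
          (topDualPairing ℂ (A →L[ℂ] StrongDual ℂ A)).flip y M :=
        WeakBilin.eval_continuous _ M
      exact @Continuous.comp A (WeakSpace ℂ (A →L[ℂ] StrongDual ℂ A)) ℂ (weakTop Ap) _ _ _ _ h1 hT.1
    exact ⟨ν, mem_of_weakTop_continuous Ap ν hcont, hνa⟩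
  · -- P ∘ Δ' = id on Ap
    intro μ hμ a
    have h1 : (adjOp (lmul a)).comp (DeltaAdj μ) = DeltaAdj (μ.comp (lmul a)) := by
      ext b c
      simp [adjOp, lmul, DeltaAdj, mul_assoc]
    rw [hM1 a _ (hDelta μ hμ), h1, ← hx _ ((hsub μ hμ a).1)]
    simp [lmul, hxid a]
  · -- bimodule property
    intro a b c T hT
    have e1 : ((adjOp (lmul b)).comp (T.comp (rmul a))).comp (rmul c)
        = (adjOp (lmul b)).comp (T.comp (rmul (c * a))) := by
      ext d e
      simp [adjOp, lmul, rmul, mul_assoc]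
    have e2 : (T.comp (rmul (c * a))).comp (rmul b) = T.comp (rmul (b * (c * a))) := by
      ext d
      simp [rmul, mul_assoc]
    rw [e1, ← hM1 b _ (hmod T hT (c * a)).1, e2, mul_assoc]
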